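/- Let D be the matrix indexed by partitions of a finite set S (|S| = n ≥ 1) over the field ℚ(q) with entries D_{𝒜ℬ} = q^{n − |𝒜∧ℬ| + |𝒜∨ℬ| − 1}. Then D is invertible over ℚ(q). -/

import Mathlib

section aux

variable {S : Type*} [Fintype S]

private lemma quot_card_le_of_le (r s : Setoid S) (h : r ≤ s) :
    Nat.card (Quotient s) ≤ Nat.card (Quotient r) := by
  have hsurj : Function.Surjective
      (fun q : Quotient r => Quotient.liftOn q (fun a => (Quotient.mk s a))
        fun a b hab => Quotient.sound (Setoid.le_def.mp h hab)) := by
    intro q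
    obtain ⟨a, rfl⟩ := q.exists_rep
    exact ⟨Quotient.mk r a, rfl⟩
  exact Nat.card_le_card_of_surjective _ hsurj

private lemma quot_card_lt_of_lt (r s : Setoid S) (h : r < s) :
    Nat.card (Quotient s) < Nat.card (Quotient r) := by
  classical
  have hle := h.le
  set f : Quotient r → Quotient s :=
    fun q => Quotient.liftOn q (fun a => (Quotient.mk s a))
      fun a b hab => Quotient.sound (Setoid.le_def.mp hle hab) with hf
  have hsurj : Function.Surjective f := by
    intro q
    obtain ⟨a, rfl⟩ := q.exists_rep
    exact ⟨Quotient.mk r a, rfl⟩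
  have hnotle : ¬ s ≤ r := fun hsr => lt_irrefl _ (lt_of_lt_of_le h hsr)
  rw [Setoid.le_def] at hnotle
  push_neg at hnotle
  obtain ⟨x, y, hsxy, hrxy⟩ := hnotle
  have hninj : ¬ Function.Injective f := by
    intro hinj
    have : Quotient.mk r x = Quotient.mk r y := hinj (Quotient.sound hsxy)
    exact hrxy (Quotient.exact this)
  have : Fintype (Quotient r) := Fintype.ofFinite _
  have : Fintype (Quotient s) := Fintype.ofFinite _
  rw [Nat.card_eq_fintype_card, Nat.card_eq_fintype_card]
  exact Fintype.card_lt_of_surjective_not_injective f hsurj hninj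

private lemma quot_card_le_card (r : Setoid S) :
    Nat.card (Quotient r) ≤ Fintype.card S := by
  have := Nat.card_le_card_of_surjective (Quotient.mk r) Quotient.mk_surjective
  simpa using this

end aux

/-- The matrix indexed by partitions of a finite set `S` with `|S| = n ≥ 1`, with entries
`D_{A B} = q ^ (n − |A∧B| + |A∨B| − 1)` over the field `ℚ(q)`, is invertible. -/
theorem splitting_matrix_invertible {S : Type*} [Fintype S]
    [Fintype (Setoid S)] [DecidableEq (Setoid S)]
    (hn : 1 ≤ Fintype.card S)
    (D : Matrix (Setoid S) (Setoid S) (RatFunc ℚ))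
    (hD : ∀ A B : Setoid S, D A B = RatFunc.X ^
      (Fintype.card S - Nat.card (Quotient (A ⊓ B)) + Nat.card (Quotient (A ⊔ B)) - 1)) :
    IsUnit D.det := by
  classical
  haveI : Nonempty S := Fintype.card_pos_iff.mp hn
  set n := Fintype.card S with hn'
  set e : Setoid S → Setoid S → ℕ :=
    fun A B => n - Nat.card (Quotient (A ⊓ B)) + Nat.card (Quotient (A ⊔ B)) - 1 with he
  -- diagonal exponents
  have hdiag : ∀ A : Setoid S, e A A = n - 1 := by
    intro A
    have h1 : Nat.card (Quotient A) ≤ n := quot_card_le_card A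
    simp only [he, inf_idem, sup_idem]
    rw [Nat.sub_add_cancel h1]
  -- off-diagonal exponents
  have hlt : ∀ A B : Setoid S, A ≠ B → e A B < n - 1 := by
    intro A B hAB
    have hle : (A ⊓ B : Setoid S) ≤ A ⊔ B := le_trans inf_le_left le_sup_left
    have hne : (A ⊓ B : Setoid S) ≠ A ⊔ B := by
      intro h
      exact hAB (inf_eq_sup.mp h)
    have hcardlt : Nat.card (Quotient (A ⊔ B)) < Nat.card (Quotient (A ⊓ B)) :=
      quot_card_lt_of_lt _ _ (lt_of_le_of_ne hle hne)
    have h1 : Nat.card (Quotient (A ⊓ B)) ≤ n := quot_card_le_card _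
    haveI : Nonempty (Quotient (A ⊔ B)) := ⟨Quotient.mk _ (Classical.arbitrary S)⟩
    have hpos : 1 ≤ Nat.card (Quotient (A ⊔ B)) := Nat.card_pos
    have hsum : n - Nat.card (Quotient (A ⊓ B)) + Nat.card (Quotient (A ⊔ B)) <
        n - Nat.card (Quotient (A ⊓ B)) + Nat.card (Quotient (A ⊓ B)) := by
      exact Nat.add_lt_add_left hcardlt _
    rw [Nat.sub_add_cancel h1] at hsum
    have hge1 : 1 ≤ n - Nat.card (Quotient (A ⊓ B)) + Nat.card (Quotient (A ⊔ B)) :=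
      le_trans hpos (Nat.le_add_left _ _)
    exact Nat.sub_lt_sub_right hge1 hsum
  -- polynomial matrix
  set P : Matrix (Setoid S) (Setoid S) (Polynomial ℚ) :=
    fun A B => Polynomial.X ^ (e A B) with hP
  have hDP : D = P.map (algebraMap (Polynomial ℚ) (RatFunc ℚ)) := by
    ext A B
    rw [Matrix.map_apply]
    simp [hD A B, hP, Matrix.map_apply, map_pow, RatFunc.algebraMap_X, he, hn']
  have hdet : D.det = algebraMap (Polynomial ℚ) (RatFunc ℚ) P.det := by
    rw [hDP, ← RingHom.mapMatrix_apply, ← RingHom.map_det]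
  set N : ℕ := Fintype.card (Setoid S) with hN
  have hPdet : P.det ≠ 0 := by
    intro h0
    have hcoeff : P.det.coeff (N * (n - 1)) = 1 := by
      rw [Matrix.det_apply]
      rw [Polynomial.finset_sum_coeff]
      rw [Finset.sum_eq_single (1 : Equiv.Perm (Setoid S))]
      · simp only [Equiv.Perm.sign_one, one_smul, Equiv.Perm.one_apply]
        rw [Finset.prod_pow_eq_pow_sum]
        have hsum : ∑ A : Setoid S, e A A = N * (n - 1) := by
          rw [Finset.sum_congr rfl (fun A _ => hdiag A)]
          simp [hN, Finset.sum_const, mul_comm]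
        rw [hsum, Polynomial.coeff_X_pow]
        simp
      · intro σ _ hσ
        have : ∃ A : Setoid S, σ A ≠ A := by
          by_contra hc
          push_neg at hc
          exact hσ (Equiv.ext fun A => hc A)
        obtain ⟨A₀, hA₀⟩ := this
        rw [Finset.prod_pow_eq_pow_sum]
        have hsumlt : ∑ A : Setoid S, e (σ A) A < N * (n - 1) := by
          have : ∑ A : Setoid S, e (σ A) A < ∑ _A : Setoid S, (n - 1) := by
            apply Finset.sum_lt_sum
            · intro A _
              rcases eq_or_ne (σ A) A with h | h
              · rw [h, hdiag]
              · exact (hlt _ _ h).le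
            · exact ⟨A₀, Finset.mem_univ _, hlt _ _ hA₀⟩
          simpa [hN, Finset.sum_const, mul_comm] using this
        rw [Polynomial.coeff_smul, Polynomial.coeff_X_pow, if_neg (by omega), smul_zero]
      · intro h
        exact absurd (Finset.mem_univ _) h
    rw [h0] at hcoeff
    simp at hcoeff
  rw [hdet, isUnit_iff_ne_zero]
  intro h
  exact hPdet (RatFunc.algebraMap_injective ℚ (by simpa using h))
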